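/- Credit-aware CPI improvement bound. Let π and π' be policies of a finite-horizon MDP and τ > 0. Suppose π'_h(·|x) = π_h(·|x) for every h and every x ∉ G_{h,τ}, and that E_{y~π'_h(·|x)}[A_h^π(x,y)] ≥ 0 for every h and every x ∈ G_{h,τ} (as holds when π' plays the greedy policy π⁺ on the improvable set). Define ε^τ_CPI = max_{h,x} |E_{y~π'_h(·|x)}[A_h^π(x,y)]|. Then for all α ∈ [0,1], the mixture policy π_α = (1−α)π + απ' satisfies J(π_α) − J(π) ≥ α·H·p_π·𝔸^G_{π,μ}(π') − α²·H²·p_π·ε^τ_CPI. -/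

import Mathlib

open Finset MeasureTheory

attribute [local instance] Classical.propDecidable

/-- A finite-horizon MDP with finite state space `X`, finite action space `Y`,
horizon `H ≥ 1`, initial distribution `μ`, transition kernels `P` and rewards `r`
(used for time steps `h ∈ {1, …, H}`). -/
structure MDP (X Y : Type*) [Fintype X] [Fintype Y] where
  H : ℕ
  H_pos : 1 ≤ H
  μ : X → ℝ
  μ_nonneg : ∀ x, 0 ≤ μ x
  μ_sum_one : ∑ x, μ x = 1
  P : ℕ → X → Y → X → ℝ
  P_nonneg : ∀ h x y x', 0 ≤ P h x y x'
  P_sum_one : ∀ h x y, ∑ x', P h x y x' = 1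
  r : ℕ → X → Y → ℝ

variable {X Y : Type*} [Fintype X] [Fintype Y]

/-- A policy assigns to each time step and state a probability distribution over actions. -/
def IsPolicy (M : MDP X Y) (π : ℕ → X → Y → ℝ) : Prop :=
  (∀ h x y, 0 ≤ π h x y) ∧ ∀ h x, ∑ y, π h x y = 1

/-- Value function `V_h^π(x)`, defined by backwards recursion with `V_{H+1}^π ≡ 0`. -/
noncomputable def Vval (M : MDP X Y) (π : ℕ → X → Y → ℝ) (h : ℕ) (x : X) : ℝ :=
  if hh : M.H < h then 0
  else ∑ y, π h x y * (M.r h x y + ∑ x', M.P h x y x' * Vval M π (h + 1) x')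
termination_by M.H + 1 - h
decreasing_by omega

/-- Action-value function `Q_h^π(x,y)`. -/
noncomputable def Qval (M : MDP X Y) (π : ℕ → X → Y → ℝ) (h : ℕ) (x : X) (y : Y) : ℝ :=
  M.r h x y + ∑ x', M.P h x y x' * Vval M π (h + 1) x'

/-- Advantage function `A_h^π(x,y) = Q_h^π(x,y) − V_h^π(x)`. -/
noncomputable def Aval (M : MDP X Y) (π : ℕ → X → Y → ℝ) (h : ℕ) (x : X) (y : Y) : ℝ :=
  Qval M π h x y - Vval M π h x

/-- Time-`h` state distribution `d_π^h` (for `h ∈ {1, …, H}`), with `d_π^1 = μ`. -/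
noncomputable def dState (M : MDP X Y) (π : ℕ → X → Y → ℝ) : ℕ → X → ℝ
  | 0 => M.μ
  | 1 => M.μ
  | (h + 2) => fun x' => ∑ x, ∑ y, dState M π (h + 1) x * π (h + 1) x y * M.P (h + 1) x y x'

/-- Expected return `J(π)`. -/
noncomputable def J (M : MDP X Y) (π : ℕ → X → Y → ℝ) : ℝ :=
  ∑ x, M.μ x * Vval M π 1 x

/-- Policy advantage `𝔸_{π,μ}(π') = (1/H) Σ_h E_{x~d_π^h} E_{y~π'_h(·|x)}[A_h^π(x,y)]`. -/
noncomputable def polAdv (M : MDP X Y) (π π' : ℕ → X → Y → ℝ) : ℝ :=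
  ((M.H : ℝ))⁻¹ * ∑ h ∈ Icc 1 M.H, ∑ x, dState M π h x * ∑ y, π' h x y * Aval M π h x y

/-- The `τ`-improvable set at time `h`: states where `max_y A_h^π(x,y) ≥ τ`. -/
noncomputable def Gset (M : MDP X Y) (π : ℕ → X → Y → ℝ) (τ : ℝ) (h : ℕ) : Set X :=
  {x | τ ≤ ⨆ y, Aval M π h x y}

/-- `p_{π,h}`: probability of the `τ`-improvable set at time `h` under `d_π^h`. -/
noncomputable def pGh (M : MDP X Y) (π : ℕ → X → Y → ℝ) (τ : ℝ) (h : ℕ) : ℝ :=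
  ∑ x, if x ∈ Gset M π τ h then dState M π h x else 0

/-- Coverage `p_π = (1/H) Σ_h p_{π,h}`. -/
noncomputable def coverage (M : MDP X Y) (π : ℕ → X → Y → ℝ) (τ : ℝ) : ℝ :=
  ((M.H : ℝ))⁻¹ * ∑ h ∈ Icc 1 M.H, pGh M π τ h

/-- Conditional policy advantage on the improvable set,
`𝔸^G_{π,μ}(π') = E[A_h^π(x,y) | x ∈ G_{h,τ}]` with `h ~ Unif{1,…,H}`, `x ~ d_π^h`,
`y ~ π'_h(·|x)`. -/
noncomputable def condAdvG (M : MDP X Y) (π π' : ℕ → X → Y → ℝ) (τ : ℝ) : ℝ :=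
  (((M.H : ℝ))⁻¹ * ∑ h ∈ Icc 1 M.H, ∑ x,
      if x ∈ Gset M π τ h then dState M π h x * ∑ y, π' h x y * Aval M π h x y else 0)
    / coverage M π τ

/-- Conditional policy advantage off the improvable set,
`𝔸^{Gc}_{π,μ}(π') = E[A_h^π(x,y) | x ∉ G_{h,τ}]`. -/
noncomputable def condAdvGc (M : MDP X Y) (π π' : ℕ → X → Y → ℝ) (τ : ℝ) : ℝ :=
  (((M.H : ℝ))⁻¹ * ∑ h ∈ Icc 1 M.H, ∑ x,
      if x ∉ Gset M π τ h then dState M π h x * ∑ y, π' h x y * Aval M π h x y else 0)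
    / (1 - coverage M π τ)

/-- Total-variation distance between two (finitely supported) distributions. -/
noncomputable def tvDist (p q : X → ℝ) : ℝ := (1 / 2) * ∑ x, |p x - q x|

/-- The statewise mixture policy `π_α = (1−α)π + απ'`. -/
def mix (α : ℝ) (π π' : ℕ → X → Y → ℝ) : ℕ → X → Y → ℝ :=
  fun h x y => (1 - α) * π h x y + α * π' h x y

/-- `ε_CPI = max_{h ∈ {1,…,H}, x} |E_{y~π'_h(·|x)}[A_h^π(x,y)]|`. -/
noncomputable def epsCPI (M : MDP X Y) (π π' : ℕ → X → Y → ℝ) : ℝ :=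
  ⨆ h : (Icc 1 M.H : Finset ℕ), ⨆ x : X, |∑ y, π' h.1 x y * Aval M π h.1 x y|

section Aux
variable {X Y : Type*} [Fintype X] [Fintype Y]

lemma Vval_of_lt (M : MDP X Y) (σ : ℕ → X → Y → ℝ) {h : ℕ} (hh : M.H < h) (x : X) :
    Vval M σ h x = 0 := by rw [Vval, dif_pos hh]

lemma Vval_of_le (M : MDP X Y) (σ : ℕ → X → Y → ℝ) {h : ℕ} (hh : h ≤ M.H) (x : X) :
    Vval M σ h x = ∑ y, σ h x y * (M.r h x y + ∑ x', M.P h x y x' * Vval M σ (h + 1) x') := by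
  rw [Vval, dif_neg (by omega)]

lemma dState_succ (M : MDP X Y) (σ : ℕ → X → Y → ℝ) {h : ℕ} (h1 : 1 ≤ h) (x' : X) :
    dState M σ (h + 1) x' = ∑ x, ∑ y, dState M σ h x * σ h x y * M.P h x y x' := by
  obtain ⟨k, rfl⟩ : ∃ k, h = k + 1 := ⟨h - 1, by omega⟩
  rfl

lemma dState_nonneg (M : MDP X Y) (σ : ℕ → X → Y → ℝ) (hσ : ∀ h x y, 0 ≤ σ h x y) :
    ∀ h x, 0 ≤ dState M σ h x := by
  intro h
  induction h with
  | zero => exact M.μ_nonneg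
  | succ n ih =>
    cases n with
    | zero => exact M.μ_nonneg
    | succ m =>
      intro x'
      rw [dState_succ M σ (by omega)]
      refine Finset.sum_nonneg fun x _ => Finset.sum_nonneg fun y _ => ?_
      exact mul_nonneg (mul_nonneg (ih x) (hσ _ x y)) (M.P_nonneg _ x y x')

lemma dState_sum_one (M : MDP X Y) (σ : ℕ → X → Y → ℝ) (hσ : ∀ h x, ∑ y, σ h x y = 1) :
    ∀ h, ∑ x, dState M σ h x = 1 := by
  intro h
  induction h with
  | zero => exact M.μ_sum_one
  | succ n ih =>
    cases n with
    | zero => exact M.μ_sum_one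
    | succ m =>
      have : ∀ x', dState M σ (m + 1 + 1) x'
          = ∑ x, ∑ y, dState M σ (m + 1) x * σ (m + 1) x y * M.P (m + 1) x y x' :=
        dState_succ M σ (by omega)
      calc ∑ x', dState M σ (m + 1 + 1) x'
          = ∑ x', ∑ x, ∑ y, dState M σ (m + 1) x * σ (m + 1) x y * M.P (m + 1) x y x' :=
            Finset.sum_congr rfl fun x' _ => this x'
        _ = ∑ x, ∑ x', ∑ y, dState M σ (m + 1) x * σ (m + 1) x y * M.P (m + 1) x y x' :=
            Finset.sum_comm
        _ = ∑ x, ∑ y, ∑ x', dState M σ (m + 1) x * σ (m + 1) x y * M.P (m + 1) x y x' :=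
            Finset.sum_congr rfl fun x _ => Finset.sum_comm
        _ = ∑ x, ∑ y, dState M σ (m + 1) x * σ (m + 1) x y := by
            refine Finset.sum_congr rfl fun x _ => Finset.sum_congr rfl fun y _ => ?_
            rw [← Finset.mul_sum, M.P_sum_one, mul_one]
        _ = ∑ x, dState M σ (m + 1) x := by
            refine Finset.sum_congr rfl fun x _ => ?_
            rw [← Finset.mul_sum, hσ, mul_one]
        _ = 1 := ih

end Aux
section Aux2
variable {X Y : Type*} [Fintype X] [Fintype Y]

lemma step_decomp (M : MDP X Y) (π σ : ℕ → X → Y → ℝ)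
    (hσsum : ∀ h x, ∑ y, σ h x y = 1) {h : ℕ} (hh : h ≤ M.H) (x : X) :
    Vval M σ h x - Vval M π h x =
      (∑ y, σ h x y * Aval M π h x y)
        + ∑ y, σ h x y * ∑ x', M.P h x y x' * (Vval M σ (h + 1) x' - Vval M π (h + 1) x') := by
  have key : (∑ y, σ h x y * Aval M π h x y)
      + ∑ y, σ h x y * ∑ x', M.P h x y x' * (Vval M σ (h + 1) x' - Vval M π (h + 1) x')
      = (∑ y, σ h x y * (M.r h x y + ∑ x', M.P h x y x' * Vval M σ (h + 1) x'))
        - (∑ y, σ h x y) * Vval M π h x := by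
    rw [← Finset.sum_add_distrib, Finset.sum_mul, ← Finset.sum_sub_distrib]
    refine Finset.sum_congr rfl fun y _ => ?_
    unfold Aval Qval
    rw [show (∑ x', M.P h x y x' * (Vval M σ (h + 1) x' - Vval M π (h + 1) x'))
        = (∑ x', M.P h x y x' * Vval M σ (h + 1) x')
          - ∑ x', M.P h x y x' * Vval M π (h + 1) x' from by
      rw [← Finset.sum_sub_distrib]; exact Finset.sum_congr rfl fun _ _ => by ring]
    ring
  rw [key, hσsum h x, one_mul, ← Vval_of_le M σ hh]

lemma own_adv_zero (M : MDP X Y) (π : ℕ → X → Y → ℝ) (hπ : IsPolicy M π)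
    {h : ℕ} (hh : h ≤ M.H) (x : X) :
    ∑ y, π h x y * Aval M π h x y = 0 := by
  have : (∑ y, π h x y * Aval M π h x y)
      = (∑ y, π h x y * Qval M π h x y) - (∑ y, π h x y) * Vval M π h x := by
    rw [Finset.sum_mul, ← Finset.sum_sub_distrib]
    exact Finset.sum_congr rfl fun y _ => by unfold Aval; ring
  rw [this, hπ.2 h x, one_mul]
  have : (∑ y, π h x y * Qval M π h x y) = Vval M π h x := by
    rw [Vval_of_le M π hh]; rfl
  rw [this, sub_self]

lemma pdl_aux (M : MDP X Y) (π σ : ℕ → X → Y → ℝ)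
    (hσsum : ∀ h x, ∑ y, σ h x y = 1) (h : ℕ) (h1 : 1 ≤ h) :
    ∑ x, dState M σ h x * (Vval M σ h x - Vval M π h x)
      = ∑ t ∈ Icc h M.H, ∑ x, dState M σ t x * ∑ y, σ t x y * Aval M π t x y := by
  by_cases hh : M.H < h
  · rw [Finset.Icc_eq_empty (by omega), Finset.sum_empty]
    simp [Vval_of_lt M σ hh, Vval_of_lt M π hh]
  · push_neg at hh
    have IH := pdl_aux M π σ hσsum (h + 1) (by omega)
    have hins : Icc h M.H = insert h (Icc (h + 1) M.H) := by
      ext t; simp only [Finset.mem_Icc, Finset.mem_insert]; omega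
    rw [hins, Finset.sum_insert (by simp [Finset.mem_Icc]), ← IH]
    calc ∑ x, dState M σ h x * (Vval M σ h x - Vval M π h x)
        = ∑ x, (dState M σ h x * ∑ y, σ h x y * Aval M π h x y
            + ∑ y, ∑ x', dState M σ h x * σ h x y * M.P h x y x'
                * (Vval M σ (h + 1) x' - Vval M π (h + 1) x')) := by
          refine Finset.sum_congr rfl fun x _ => ?_
          rw [step_decomp M π σ hσsum hh x, mul_add]
          congr 1
          rw [Finset.mul_sum]
          refine Finset.sum_congr rfl fun y _ => ?_
          rw [Finset.mul_sum, Finset.mul_sum]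
          exact Finset.sum_congr rfl fun x' _ => by ring
      _ = (∑ x, dState M σ h x * ∑ y, σ h x y * Aval M π h x y)
            + ∑ x, ∑ y, ∑ x', dState M σ h x * σ h x y * M.P h x y x'
                * (Vval M σ (h + 1) x' - Vval M π (h + 1) x') := Finset.sum_add_distrib
      _ = (∑ x, dState M σ h x * ∑ y, σ h x y * Aval M π h x y)
            + ∑ x', dState M σ (h + 1) x' * (Vval M σ (h + 1) x' - Vval M π (h + 1) x') := by
          congr 1
          calc ∑ x, ∑ y, ∑ x', dState M σ h x * σ h x y * M.P h x y x'
                  * (Vval M σ (h + 1) x' - Vval M π (h + 1) x')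
              = ∑ x, ∑ x', ∑ y, dState M σ h x * σ h x y * M.P h x y x'
                  * (Vval M σ (h + 1) x' - Vval M π (h + 1) x') :=
                Finset.sum_congr rfl fun x _ => Finset.sum_comm
            _ = ∑ x', ∑ x, ∑ y, dState M σ h x * σ h x y * M.P h x y x'
                  * (Vval M σ (h + 1) x' - Vval M π (h + 1) x') := Finset.sum_comm
            _ = ∑ x', dState M σ (h + 1) x' * (Vval M σ (h + 1) x' - Vval M π (h + 1) x') := by
                refine Finset.sum_congr rfl fun x' _ => ?_
                rw [dState_succ M σ h1 x', Finset.sum_mul]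
                exact Finset.sum_congr rfl fun x _ => by rw [Finset.sum_mul]
termination_by M.H + 1 - h

lemma pdl (M : MDP X Y) (π σ : ℕ → X → Y → ℝ) (hσsum : ∀ h x, ∑ y, σ h x y = 1) :
    J M σ - J M π
      = ∑ h ∈ Icc 1 M.H, ∑ x, dState M σ h x * ∑ y, σ h x y * Aval M π h x y := by
  rw [← pdl_aux M π σ hσsum 1 le_rfl]
  unfold J
  rw [← Finset.sum_sub_distrib]
  exact Finset.sum_congr rfl fun x _ => by
    rw [show dState M σ 1 x = M.μ x from rfl]; ring

end Aux2
section Aux3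
variable {X Y : Type*} [Fintype X] [Fintype Y]

lemma pGh_nonneg (M : MDP X Y) (π : ℕ → X → Y → ℝ) (hπ : IsPolicy M π) (τ : ℝ) (h : ℕ) :
    0 ≤ pGh M π τ h := by
  refine Finset.sum_nonneg fun x _ => ?_
  by_cases hx : x ∈ Gset M π τ h
  · rw [if_pos hx]; exact dState_nonneg M π hπ.1 h x
  · rw [if_neg hx]

lemma tv_bound (M : MDP X Y) (π π' : ℕ → X → Y → ℝ) (hπ : IsPolicy M π) (hπ' : IsPolicy M π')
    (τ : ℝ)
    (hagree : ∀ h ∈ Icc 1 M.H, ∀ x, x ∉ Gset M π τ h → ∀ y, π' h x y = π h x y)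
    (α : ℝ) (hα0 : 0 ≤ α) (hα1 : α ≤ 1) :
    ∀ h, 1 ≤ h → h ≤ M.H + 1 →
      ∑ x, |dState M (mix α π π') h x - dState M π h x|
        ≤ 2 * α * ∑ t ∈ Icc 1 (h - 1), pGh M π τ t := by
  intro h h1
  induction h, h1 using Nat.le_induction with
  | base =>
    intro _
    simp [show dState M (mix α π π') 1 = M.μ from rfl, show dState M π 1 = M.μ from rfl]
  | succ n hn IH =>
    intro hle
    have hnH : n ≤ M.H := by omega
    have IH' := IH (by omega)
    -- abbreviations
    set dα := dState M (mix α π π') with hdα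
    set d := dState M π with hd
    have habs : ∀ x', |dα (n + 1) x' - d (n + 1) x'|
        ≤ ∑ x, ∑ y, |dα n x * mix α π π' n x y - d n x * π n x y| * M.P n x y x' := by
      intro x'
      rw [hdα, hd, dState_succ M (mix α π π') hn x', dState_succ M π hn x',
        ← Finset.sum_sub_distrib]
      refine (Finset.abs_sum_le_sum_abs _ _).trans (Finset.sum_le_sum fun x _ => ?_)
      rw [← Finset.sum_sub_distrib]
      refine (Finset.abs_sum_le_sum_abs _ _).trans (Finset.sum_le_sum fun y _ => ?_)
      rw [show dState M (mix α π π') n x * mix α π π' n x y * M.P n x y x'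
            - dState M π n x * π n x y * M.P n x y x'
          = (dState M (mix α π π') n x * mix α π π' n x y - dState M π n x * π n x y)
              * M.P n x y x' from by ring,
        abs_mul, abs_of_nonneg (M.P_nonneg n x y x')]
    have h2 : ∑ x', |dα (n + 1) x' - d (n + 1) x'|
        ≤ ∑ x, ∑ y, |dα n x * mix α π π' n x y - d n x * π n x y| := by
      refine (Finset.sum_le_sum fun x' _ => habs x').trans_eq ?_
      calc ∑ x', ∑ x, ∑ y, |dα n x * mix α π π' n x y - d n x * π n x y| * M.P n x y x'
          = ∑ x, ∑ x', ∑ y, |dα n x * mix α π π' n x y - d n x * π n x y| * M.P n x y x' :=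
            Finset.sum_comm
        _ = ∑ x, ∑ y, ∑ x', |dα n x * mix α π π' n x y - d n x * π n x y| * M.P n x y x' :=
            Finset.sum_congr rfl fun x _ => Finset.sum_comm
        _ = ∑ x, ∑ y, |dα n x * mix α π π' n x y - d n x * π n x y| := by
            refine Finset.sum_congr rfl fun x _ => Finset.sum_congr rfl fun y _ => ?_
            rw [← Finset.mul_sum, M.P_sum_one, mul_one]
    have h3 : ∀ x, (∑ y, |dα n x * mix α π π' n x y - d n x * π n x y|)
        ≤ |dα n x - d n x| + (if x ∈ Gset M π τ n then 2 * α * d n x else 0) := by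
      intro x
      by_cases hg : x ∈ Gset M π τ n
      · rw [if_pos hg]
        calc (∑ y, |dα n x * mix α π π' n x y - d n x * π n x y|)
            ≤ ∑ y, (|dα n x - d n x| * mix α π π' n x y
                + d n x * (α * (π' n x y + π n x y))) := by
              refine Finset.sum_le_sum fun y _ => ?_
              rw [show dα n x * mix α π π' n x y - d n x * π n x y
                  = (dα n x - d n x) * mix α π π' n x y
                    + d n x * (mix α π π' n x y - π n x y) from by ring]
              refine (abs_add_le _ _).trans (add_le_add ?_ ?_)
              · rw [abs_mul]
                have hmix0 : 0 ≤ mix α π π' n x y :=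
                  add_nonneg (mul_nonneg (by linarith) (hπ.1 n x y))
                    (mul_nonneg hα0 (hπ'.1 n x y))
                rw [abs_of_nonneg hmix0]
              · rw [abs_mul, abs_of_nonneg (dState_nonneg M π hπ.1 n x)]
                refine mul_le_mul_of_nonneg_left ?_ (dState_nonneg M π hπ.1 n x)
                rw [show mix α π π' n x y - π n x y = α * (π' n x y - π n x y) from by
                  unfold mix; ring, abs_mul, abs_of_nonneg hα0]
                refine mul_le_mul_of_nonneg_left ?_ hα0
                refine (abs_sub _ _).trans ?_
                rw [abs_of_nonneg (hπ'.1 n x y), abs_of_nonneg (hπ.1 n x y)]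
          _ = |dα n x - d n x| + 2 * α * d n x := by
              rw [Finset.sum_add_distrib, ← Finset.mul_sum, ← Finset.mul_sum]
              have hmixsum : ∑ y, mix α π π' n x y = 1 := by
                unfold mix
                rw [Finset.sum_add_distrib, ← Finset.mul_sum, ← Finset.mul_sum,
                  hπ.2 n x, hπ'.2 n x]; ring
              rw [hmixsum, mul_one]
              congr 1
              rw [show (∑ y, α * (π' n x y + π n x y))
                  = α * ((∑ y, π' n x y) + ∑ y, π n x y) from by
                simp [Finset.mul_sum, Finset.sum_add_distrib, mul_add],
                hπ.2 n x, hπ'.2 n x]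
              ring
      · rw [if_neg hg, add_zero]
        have hmix : ∀ y, mix α π π' n x y = π n x y := by
          intro y; unfold mix; rw [hagree n (by simp [Finset.mem_Icc]; omega) x hg y]; ring
        refine le_of_eq ?_
        calc (∑ y, |dα n x * mix α π π' n x y - d n x * π n x y|)
            = ∑ y, |dα n x - d n x| * π n x y := by
              refine Finset.sum_congr rfl fun y _ => ?_
              rw [hmix y, show dα n x * π n x y - d n x * π n x y
                  = (dα n x - d n x) * π n x y from by ring, abs_mul,
                abs_of_nonneg (hπ.1 n x y)]
          _ = |dα n x - d n x| := by rw [← Finset.mul_sum, hπ.2 n x, mul_one]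
    have h4 : ∑ x', |dα (n + 1) x' - d (n + 1) x'|
        ≤ (∑ x, |dα n x - d n x|) + 2 * α * pGh M π τ n := by
      refine h2.trans ?_
      refine (Finset.sum_le_sum fun x _ => h3 x).trans_eq ?_
      rw [Finset.sum_add_distrib]
      congr 1
      unfold pGh
      rw [Finset.mul_sum]
      refine Finset.sum_congr rfl fun x _ => ?_
      by_cases hg : x ∈ Gset M π τ n
      · rw [if_pos hg, if_pos hg]
      · rw [if_neg hg, if_neg hg, mul_zero]
    have hicc : Icc 1 (n + 1 - 1) = insert n (Icc 1 (n - 1)) := by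
      ext t; simp only [Finset.mem_Icc, Finset.mem_insert]; omega
    rw [hicc, Finset.sum_insert (by simp [Finset.mem_Icc]; omega), mul_add]
    calc ∑ x', |dα (n + 1) x' - d (n + 1) x'|
        ≤ (∑ x, |dα n x - d n x|) + 2 * α * pGh M π τ n := h4
      _ ≤ 2 * α * ∑ t ∈ Icc 1 (n - 1), pGh M π τ t + 2 * α * pGh M π τ n := by
          exact add_le_add IH' le_rfl
      _ = 2 * α * pGh M π τ n + 2 * α * ∑ t ∈ Icc 1 (n - 1), pGh M π τ t := by ring

end Aux3
/-- **Credit-aware CPI improvement bound.**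
If `π'` agrees with `π` off the improvable sets and has nonnegative expected
advantage on them, then for `α ∈ [0,1]`,
`J(π_α) − J(π) ≥ α·H·p_π·𝔸^G_{π,μ}(π') − α²·H²·p_π·ε^τ_CPI`. -/
theorem credit_aware_cpi_bound
    {X Y : Type*} [Fintype X] [Fintype Y] [Nonempty X] [Nonempty Y]
    (M : MDP X Y) (π π' : ℕ → X → Y → ℝ)
    (hπ : IsPolicy M π) (hπ' : IsPolicy M π')
    (τ : ℝ) (hτ : 0 < τ) (hp : 0 < coverage M π τ)
    (hagree : ∀ h ∈ Icc 1 M.H, ∀ x, x ∉ Gset M π τ h → ∀ y, π' h x y = π h x y)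
    (hpos : ∀ h ∈ Icc 1 M.H, ∀ x ∈ Gset M π τ h, 0 ≤ ∑ y, π' h x y * Aval M π h x y)
    (α : ℝ) (hα : α ∈ Set.Icc (0 : ℝ) 1) :
    α * (M.H : ℝ) * coverage M π τ * condAdvG M π π' τ
        - α ^ 2 * (M.H : ℝ) ^ 2 * coverage M π τ * epsCPI M π π'
      ≤ J M (mix α π π') - J M π := by
  obtain ⟨hα0, hα1⟩ := hα
  have hH1 : 1 ≤ M.H := M.H_pos
  have hHpos : (0 : ℝ) < (M.H : ℝ) := by exact_mod_cast Nat.lt_of_lt_of_le Nat.zero_lt_one hH1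
  have hHne : ((M.H : ℝ)) ≠ 0 := ne_of_gt hHpos
  have hpne : coverage M π τ ≠ 0 := ne_of_gt hp
  -- the mixture is a policy
  have hmixpol : IsPolicy M (mix α π π') := by
    constructor
    · intro h x y
      exact add_nonneg (mul_nonneg (by linarith) (hπ.1 h x y)) (mul_nonneg hα0 (hπ'.1 h x y))
    · intro h x
      unfold mix
      rw [Finset.sum_add_distrib, ← Finset.mul_sum, ← Finset.mul_sum, hπ.2 h x, hπ'.2 h x]
      ring
  -- expected advantage of π' is zero off the improvable set
  have hfz : ∀ h ∈ Icc 1 M.H, ∀ x, x ∉ Gset M π τ h →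
      (∑ y, π' h x y * Aval M π h x y) = 0 := by
    intro h hh x hx
    have hhH : h ≤ M.H := (Finset.mem_Icc.1 hh).2
    rw [show (∑ y, π' h x y * Aval M π h x y) = ∑ y, π h x y * Aval M π h x y from
      Finset.sum_congr rfl fun y _ => by rw [hagree h hh x hx y]]
    exact own_adv_zero M π hπ hhH x
  -- and nonnegative everywhere
  have hf0 : ∀ h ∈ Icc 1 M.H, ∀ x, 0 ≤ ∑ y, π' h x y * Aval M π h x y := by
    intro h hh x
    by_cases hx : x ∈ Gset M π τ h
    · exact hpos h hh x hx
    · rw [hfz h hh x hx]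
  -- epsCPI bounds
  have heps : ∀ h ∈ Icc 1 M.H, ∀ x,
      |∑ y, π' h x y * Aval M π h x y| ≤ epsCPI M π π' := by
    intro h hh x
    have h1 : |∑ y, π' h x y * Aval M π h x y|
        ≤ ⨆ x : X, |∑ y, π' h x y * Aval M π h x y| :=
      le_ciSup (f := fun x : X => |∑ y, π' h x y * Aval M π h x y|)
        (Set.Finite.bddAbove (Set.finite_range _)) x
    refine h1.trans ?_
    exact le_ciSup (f := fun h : (Icc 1 M.H : Finset ℕ) =>
        ⨆ x : X, |∑ y, π' h.1 x y * Aval M π h.1 x y|)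
      (Set.Finite.bddAbove (Set.finite_range _)) ⟨h, hh⟩
  have h1mem : (1 : ℕ) ∈ Icc 1 M.H := Finset.mem_Icc.2 ⟨le_rfl, hH1⟩
  have heps0 : 0 ≤ epsCPI M π π' :=
    (abs_nonneg _).trans (heps 1 h1mem (Classical.arbitrary X))
  have hfle : ∀ h ∈ Icc 1 M.H, ∀ x,
      (∑ y, π' h x y * Aval M π h x y) ≤ epsCPI M π π' :=
    fun h hh x => (le_abs_self _).trans (heps h hh x)
  -- state distributions sum to one
  have hsum1 : ∀ h, ∑ x, dState M π h x = 1 := dState_sum_one M π hπ.2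
  have hsumα : ∀ h, ∑ x, dState M (mix α π π') h x = 1 := dState_sum_one M _ hmixpol.2
  -- TV bound
  have hSp : ∑ t ∈ Icc 1 M.H, pGh M π τ t = (M.H : ℝ) * coverage M π τ := by
    unfold coverage; field_simp
  have htv : ∀ h ∈ Icc 1 M.H,
      ∑ x, |dState M (mix α π π') h x - dState M π h x|
        ≤ 2 * α * ((M.H : ℝ) * coverage M π τ) := by
    intro h hh
    obtain ⟨hh1, hh2⟩ := Finset.mem_Icc.1 hh
    refine (tv_bound M π π' hπ hπ' τ hagree α hα0 hα1 h hh1 (by omega)).trans ?_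
    rw [← hSp]
    refine mul_le_mul_of_nonneg_left ?_ (by linarith)
    refine Finset.sum_le_sum_of_subset_of_nonneg ?_ fun t _ _ => pGh_nonneg M π hπ τ t
    intro t ht
    simp only [Finset.mem_Icc] at *
    omega
  -- performance difference for the mixture
  have hJ : J M (mix α π π') - J M π
      = α * ∑ h ∈ Icc 1 M.H, ∑ x,
          dState M (mix α π π') h x * ∑ y, π' h x y * Aval M π h x y := by
    rw [pdl M π (mix α π π') hmixpol.2, Finset.mul_sum]
    refine Finset.sum_congr rfl fun h hh => ?_
    obtain ⟨_, hh2⟩ := Finset.mem_Icc.1 hh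
    rw [Finset.mul_sum]
    refine Finset.sum_congr rfl fun x _ => ?_
    have hmixadv : (∑ y, mix α π π' h x y * Aval M π h x y)
        = α * ∑ y, π' h x y * Aval M π h x y := by
      unfold mix
      rw [show (∑ y, ((1 - α) * π h x y + α * π' h x y) * Aval M π h x y)
          = (1 - α) * (∑ y, π h x y * Aval M π h x y)
            + α * ∑ y, π' h x y * Aval M π h x y from by
        simp [add_mul, Finset.sum_add_distrib, Finset.mul_sum, mul_assoc],
        own_adv_zero M π hπ hh2 x]
      ring
    rw [hmixadv]; ring
  -- relation of the on-policy sum to condAdvG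
  have hSind : ∑ h ∈ Icc 1 M.H, ∑ x, dState M π h x * ∑ y, π' h x y * Aval M π h x y
      = ∑ h ∈ Icc 1 M.H, ∑ x,
          if x ∈ Gset M π τ h then dState M π h x * ∑ y, π' h x y * Aval M π h x y
          else 0 := by
    refine Finset.sum_congr rfl fun h hh => Finset.sum_congr rfl fun x _ => ?_
    by_cases hx : x ∈ Gset M π τ h
    · rw [if_pos hx]
    · rw [if_neg hx, hfz h hh x hx, mul_zero]
  have hcond : (M.H : ℝ) * coverage M π τ * condAdvG M π π' τ
      = ∑ h ∈ Icc 1 M.H, ∑ x, dState M π h x * ∑ y, π' h x y * Aval M π h x y := by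
    rw [hSind]
    unfold condAdvG
    field_simp
  -- per-step error bound
  have herr : ∀ h ∈ Icc 1 M.H,
      -(epsCPI M π π' / 2 * ∑ x, |dState M (mix α π π') h x - dState M π h x|)
        ≤ ∑ x, (dState M (mix α π π') h x - dState M π h x)
            * ∑ y, π' h x y * Aval M π h x y := by
    intro h hh
    have hkey : ∑ x, (dState M (mix α π π') h x - dState M π h x)
          * ∑ y, π' h x y * Aval M π h x y
        = ∑ x, (dState M (mix α π π') h x - dState M π h x)
            * ((∑ y, π' h x y * Aval M π h x y) - epsCPI M π π' / 2) := by
      have hz : ∑ x, (dState M (mix α π π') h x - dState M π h x) * (epsCPI M π π' / 2)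
          = 0 := by
        rw [← Finset.sum_mul, Finset.sum_sub_distrib, hsumα h, hsum1 h, sub_self, zero_mul]
      calc ∑ x, (dState M (mix α π π') h x - dState M π h x)
              * ∑ y, π' h x y * Aval M π h x y
          = (∑ x, (dState M (mix α π π') h x - dState M π h x)
                * ((∑ y, π' h x y * Aval M π h x y) - epsCPI M π π' / 2))
              + ∑ x, (dState M (mix α π π') h x - dState M π h x) * (epsCPI M π π' / 2) := by
            rw [← Finset.sum_add_distrib]
            exact Finset.sum_congr rfl fun x _ => by ring
        _ = _ := by rw [hz, add_zero]
    have hterm : ∀ x, -(|dState M (mix α π π') h x - dState M π h x| * (epsCPI M π π' / 2))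
        ≤ (dState M (mix α π π') h x - dState M π h x)
            * ((∑ y, π' h x y * Aval M π h x y) - epsCPI M π π' / 2) := by
      intro x
      have habs : |(dState M (mix α π π') h x - dState M π h x)
            * ((∑ y, π' h x y * Aval M π h x y) - epsCPI M π π' / 2)|
          ≤ |dState M (mix α π π') h x - dState M π h x| * (epsCPI M π π' / 2) := by
        rw [abs_mul]
        refine mul_le_mul_of_nonneg_left ?_ (abs_nonneg _)
        rw [abs_le]
        constructor
        · have := hf0 h hh x; linarith
        · have := hfle h hh x; linarith
      have := neg_abs_le ((dState M (mix α π π') h x - dState M π h x)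
          * ((∑ y, π' h x y * Aval M π h x y) - epsCPI M π π' / 2))
      linarith
    have hneg : -(epsCPI M π π' / 2 * ∑ x, |dState M (mix α π π') h x - dState M π h x|)
        = ∑ x, -(|dState M (mix α π π') h x - dState M π h x| * (epsCPI M π π' / 2)) := by
      rw [Finset.mul_sum, ← Finset.sum_neg_distrib]
      exact Finset.sum_congr rfl fun x _ => by ring
    rw [hkey, hneg]
    exact Finset.sum_le_sum fun x _ => hterm x
  -- combine
  have hmain : (∑ h ∈ Icc 1 M.H, ∑ x, dState M π h x * ∑ y, π' h x y * Aval M π h x y)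
      - (M.H : ℝ) * (epsCPI M π π' * α * ((M.H : ℝ) * coverage M π τ))
      ≤ ∑ h ∈ Icc 1 M.H, ∑ x,
          dState M (mix α π π') h x * ∑ y, π' h x y * Aval M π h x y := by
    have hstep : ∀ h ∈ Icc 1 M.H,
        (∑ x, dState M π h x * ∑ y, π' h x y * Aval M π h x y)
          - epsCPI M π π' * α * ((M.H : ℝ) * coverage M π τ)
        ≤ ∑ x, dState M (mix α π π') h x * ∑ y, π' h x y * Aval M π h x y := by
      intro h hh
      have hsplit : ∑ x, dState M (mix α π π') h x * ∑ y, π' h x y * Aval M π h x y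
          = (∑ x, dState M π h x * ∑ y, π' h x y * Aval M π h x y)
            + ∑ x, (dState M (mix α π π') h x - dState M π h x)
                * ∑ y, π' h x y * Aval M π h x y := by
        rw [← Finset.sum_add_distrib]
        exact Finset.sum_congr rfl fun x _ => by ring
      rw [hsplit]
      have h1 := herr h hh
      have h2 := htv h hh
      have h3 : epsCPI M π π' / 2 * ∑ x, |dState M (mix α π π') h x - dState M π h x|
          ≤ epsCPI M π π' / 2 * (2 * α * ((M.H : ℝ) * coverage M π τ)) :=
        mul_le_mul_of_nonneg_left h2 (by linarith)
      linarith
    calc (∑ h ∈ Icc 1 M.H, ∑ x, dState M π h x * ∑ y, π' h x y * Aval M π h x y)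
          - (M.H : ℝ) * (epsCPI M π π' * α * ((M.H : ℝ) * coverage M π τ))
        = ∑ h ∈ Icc 1 M.H,
            ((∑ x, dState M π h x * ∑ y, π' h x y * Aval M π h x y)
              - epsCPI M π π' * α * ((M.H : ℝ) * coverage M π τ)) := by
          rw [Finset.sum_sub_distrib, Finset.sum_const, Nat.card_Icc]
          simp only [nsmul_eq_mul]
          rw [show (M.H + 1 - 1 : ℕ) = M.H from by omega]
      _ ≤ _ := Finset.sum_le_sum hstep
  rw [hJ]
  have hfinal := mul_le_mul_of_nonneg_left hmain hα0
  rw [show α * (M.H : ℝ) * coverage M π τ * condAdvG M π π' τ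
      = α * ((M.H : ℝ) * coverage M π τ * condAdvG M π π' τ) from by ring, hcond]
  nlinarith [hfinal]
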